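/- Let μ(A) = γ(m(A)) be a distorted Lebesgue measure (γ nondecreasing, concave, continuous, γ(0)=0) and 1 < p < ∞. Then the Volterra–Choquet operator V: L⁺_{p,μ}([0,1]) → C⁺[0,1], V(f)(x) = (C)∫_{[0,x]} f dμ, is a compact nonlinear operator: it is continuous (with respect to the L_{p,μ}-metric and the uniform norm) and maps bounded sets to relatively compact sets. -/

import Mathlib

open MeasureTheory Set Filter Topology

/-- The Choquet integral of `f` over `A` with respect to the set function `μ`:
`∫_0^∞ μ({f ≥ β} ∩ A) dβ + ∫_{-∞}^0 (μ({f ≥ β} ∩ A) - μ A) dβ`. -/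
noncomputable def choquet {α : Type*} (μ : Set α → ℝ) (A : Set α) (f : α → ℝ) : ℝ :=
  (∫ β in Ioi (0:ℝ), μ ({ω | β ≤ f ω} ∩ A)) +
  ∫ β in Iio (0:ℝ), (μ ({ω | β ≤ f ω} ∩ A) - μ A)

/-- Membership in `L⁺_{p,μ}([0,1])`: nonnegative, measurable, with finite Choquet `p`-norm. -/
def MemLpPlus (μ : Set ℝ → ℝ) (p : ℝ) (f : ℝ → ℝ) : Prop :=
  Measurable f ∧ (∀ t, 0 ≤ f t) ∧
    IntegrableOn (fun β => μ ({t | β ≤ f t ^ p} ∩ Icc 0 1)) (Ioi (0:ℝ))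

namespace VC

variable {γ : ℝ → ℝ}

lemma vol_ne_top {S : Set ℝ} (hS : S ⊆ Icc 0 1) : volume S ≠ ⊤ := by
  refine ne_top_of_le_ne_top ?_ (measure_mono hS)
  simp [Real.volume_Icc]

lemma vol_mem {S : Set ℝ} (hS : S ⊆ Icc 0 1) : (volume S).toReal ∈ Icc (0:ℝ) 1 := by
  refine ⟨ENNReal.toReal_nonneg, ?_⟩
  have h1 : volume S ≤ volume (Icc (0:ℝ) 1) := measure_mono hS
  have h2 : volume (Icc (0:ℝ) 1) = 1 := by simp [Real.volume_Icc]
  calc (volume S).toReal ≤ (volume (Icc (0:ℝ) 1)).toReal :=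
        ENNReal.toReal_mono (by simp [h2]) h1
    _ = 1 := by simp [h2]

lemma gamma_nonneg (hγmono : MonotoneOn γ (Icc 0 1)) (hγ0 : γ 0 = 0)
    {a : ℝ} (ha : a ∈ Icc (0:ℝ) 1) : 0 ≤ γ a := by
  have := hγmono (left_mem_Icc.2 zero_le_one) ha ha.1
  linarith [hγ0 ▸ this]

lemma gamma_one_nonneg (hγmono : MonotoneOn γ (Icc 0 1)) (hγ0 : γ 0 = 0) : 0 ≤ γ 1 :=
  gamma_nonneg hγmono hγ0 (right_mem_Icc.2 zero_le_one)

lemma gamma_mul_le (hγconc : ConcaveOn ℝ (Icc 0 1) γ) (hγ0 : γ 0 = 0)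
    {a : ℝ} (ha : a ∈ Icc (0:ℝ) 1) : a * γ 1 ≤ γ a := by
  have h := hγconc.2 (left_mem_Icc.2 zero_le_one) (right_mem_Icc.2 zero_le_one)
    (by linarith [ha.2] : (0:ℝ) ≤ 1 - a) ha.1 (by ring)
  simp only [smul_eq_mul, mul_zero, mul_one, zero_add] at h
  linarith [h, hγ0 ▸ h]

lemma gamma_subadd (hγmono : MonotoneOn γ (Icc 0 1)) (hγconc : ConcaveOn ℝ (Icc 0 1) γ)
    (hγ0 : γ 0 = 0) {a b c : ℝ} (ha : a ∈ Icc (0:ℝ) 1) (hb : b ∈ Icc (0:ℝ) 1)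
    (hc : c ∈ Icc (0:ℝ) 1) (h : c ≤ a + b) : γ c ≤ γ a + γ b := by
  rcases le_or_gt (a + b) 1 with hab | hab
  · -- a+b ≤ 1
    have hs : a + b ∈ Icc (0:ℝ) 1 := ⟨by linarith [ha.1, hb.1], hab⟩
    have hcs : γ c ≤ γ (a + b) := hγmono hc hs h
    rcases eq_or_lt_of_le (by linarith [ha.1, hb.1] : (0:ℝ) ≤ a + b) with h0 | h0
    · have ha0 : a = 0 := by linarith [ha.1, hb.1]
      have hb0 : b = 0 := by linarith [ha.1, hb.1]
      rw [ha0, hb0, hγ0]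
      have : c = 0 := le_antisymm (by linarith) hc.1
      simp [this, hγ0]
    · -- γ a ≥ (a/(a+b)) γ (a+b), similarly for b
      set s := a + b with hsdef
      have hdivnn : 0 ≤ a / s := div_nonneg ha.1 h0.le
      have hdivnn' : 0 ≤ b / s := div_nonneg hb.1 h0.le
      have hsum : a / s + b / s = 1 := by
        rw [← add_div, div_self h0.ne']
      have hga : (a / s) * γ s ≤ γ a := by
        have h' := hγconc.2 hs (left_mem_Icc.2 zero_le_one) hdivnn hdivnn' hsum
        simp only [smul_eq_mul, mul_zero, add_zero, hγ0] at h'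
        simpa [div_mul_cancel₀ _ h0.ne'] using h' 
      have hgb : (b / s) * γ s ≤ γ b := by
        have h' := hγconc.2 (left_mem_Icc.2 zero_le_one) hs hdivnn hdivnn' hsum
        simp only [smul_eq_mul, mul_zero, zero_add, hγ0] at h'
        simpa [div_mul_cancel₀ _ h0.ne'] using h' 
      have : γ s = (a/s) * γ s + (b/s) * γ s := by
        rw [← add_mul, hsum, one_mul]
      linarith
  · -- a + b > 1
    have h1 : γ c ≤ γ 1 := hγmono hc (right_mem_Icc.2 zero_le_one) hc.2
    have h2 : a * γ 1 ≤ γ a := gamma_mul_le hγconc hγ0 ha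
    have h3 : b * γ 1 ≤ γ b := gamma_mul_le hγconc hγ0 hb
    nlinarith [gamma_one_nonneg hγmono hγ0]

lemma gamma_vol_subadd (hγmono : MonotoneOn γ (Icc 0 1)) (hγconc : ConcaveOn ℝ (Icc 0 1) γ)
    (hγ0 : γ 0 = 0) {S A B : Set ℝ} (hSAB : S ⊆ A ∪ B) (hS : S ⊆ Icc 0 1)
    (hA : A ⊆ Icc 0 1) (hB : B ⊆ Icc 0 1) :
    γ (volume S).toReal ≤ γ (volume A).toReal + γ (volume B).toReal := by
  refine gamma_subadd hγmono hγconc hγ0 (vol_mem hA) (vol_mem hB) (vol_mem hS) ?_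
  have h1 : volume S ≤ volume A + volume B :=
    le_trans (measure_mono hSAB) (measure_union_le A B)
  exact ENNReal.toReal_le_add h1 (vol_ne_top hA) (vol_ne_top hB)




/-- `G γ f x β = γ(volume({f ≥ β} ∩ [0,x]))`. -/
noncomputable def G (γ f : ℝ → ℝ) (x β : ℝ) : ℝ :=
  γ (volume ({t | β ≤ f t} ∩ Icc 0 x)).toReal

lemma G_set_subset {f : ℝ → ℝ} {x : ℝ} (hx : x ∈ Icc (0:ℝ) 1) (β : ℝ) :
    {t | β ≤ f t} ∩ Icc 0 x ⊆ Icc 0 1 :=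
  (inter_subset_right).trans (Icc_subset_Icc le_rfl hx.2)

lemma G_vol_mem {f : ℝ → ℝ} {x : ℝ} (hx : x ∈ Icc (0:ℝ) 1) (β : ℝ) :
    (volume ({t | β ≤ f t} ∩ Icc 0 x)).toReal ∈ Icc (0:ℝ) 1 :=
  vol_mem (G_set_subset hx β)

lemma G_nonneg (hγmono : MonotoneOn γ (Icc 0 1)) (hγ0 : γ 0 = 0)
    {f : ℝ → ℝ} {x : ℝ} (hx : x ∈ Icc (0:ℝ) 1) (β : ℝ) : 0 ≤ G γ f x β :=
  gamma_nonneg hγmono hγ0 (G_vol_mem hx β)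

lemma G_le_one (hγmono : MonotoneOn γ (Icc 0 1))
    {f : ℝ → ℝ} {x : ℝ} (hx : x ∈ Icc (0:ℝ) 1) (β : ℝ) : G γ f x β ≤ γ 1 :=
  hγmono (G_vol_mem hx β) (right_mem_Icc.2 zero_le_one) (G_vol_mem hx β).2

lemma G_antitone (hγmono : MonotoneOn γ (Icc 0 1))
    {f : ℝ → ℝ} {x : ℝ} (hx : x ∈ Icc (0:ℝ) 1) : Antitone (G γ f x) := by
  intro β β' h
  refine hγmono (G_vol_mem hx β') (G_vol_mem hx β) ?_
  refine ENNReal.toReal_mono (vol_ne_top (G_set_subset hx β)) ?_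
  refine measure_mono (inter_subset_inter_left _ ?_)
  intro t ht; exact le_trans h ht

lemma G_measurable (hγmono : MonotoneOn γ (Icc 0 1))
    {f : ℝ → ℝ} {x : ℝ} (hx : x ∈ Icc (0:ℝ) 1) : Measurable (G γ f x) :=
  (G_antitone hγmono hx).measurable

lemma G_mono_x (hγmono : MonotoneOn γ (Icc 0 1)) {f : ℝ → ℝ} {x y : ℝ}
    (hx : x ∈ Icc (0:ℝ) 1) (hy : y ∈ Icc (0:ℝ) 1) (hxy : x ≤ y) (β : ℝ) :
    G γ f x β ≤ G γ f y β := by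
  refine hγmono (G_vol_mem hx β) (G_vol_mem hy β) ?_
  refine ENNReal.toReal_mono (vol_ne_top (G_set_subset hy β)) ?_
  exact measure_mono (inter_subset_inter_right _ (Icc_subset_Icc le_rfl hxy))

lemma G_nonpos_eq {f : ℝ → ℝ} (hf : ∀ t, 0 ≤ f t) {x β : ℝ} (hβ : β ≤ 0) :
    G γ f x β = γ (volume (Icc (0:ℝ) x)).toReal := by
  have hset : {t | β ≤ f t} ∩ Icc 0 x = Icc 0 x := by
    refine inter_eq_self_of_subset_right fun t _ => ?_
    exact le_trans hβ (hf t)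
  unfold G
  rw [hset]

/-- The Choquet integral of a nonnegative function reduces to the `Ioi 0` part. -/
lemma choquet_eq (γ f : ℝ → ℝ) (hf : ∀ t, 0 ≤ f t) (x : ℝ) :
    choquet (fun A => γ (volume A).toReal) (Icc 0 x) f = ∫ β in Ioi (0:ℝ), G γ f x β := by
  unfold choquet G
  have h2 : (∫ β in Iio (0:ℝ), (γ (volume ({ω | β ≤ f ω} ∩ Icc 0 x)).toReal
      - γ (volume (Icc (0:ℝ) x)).toReal)) = 0 := by
    rw [setIntegral_congr_fun measurableSet_Iio (g := fun _ => (0:ℝ))]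
    · simp
    · intro β hβ
      have : {ω | β ≤ f ω} ∩ Icc 0 x = Icc 0 x := by
        refine inter_eq_self_of_subset_right fun t _ => ?_
        exact le_trans (le_of_lt hβ) (hf t)
      simp [this]
  rw [h2, add_zero]

/-- `Hp p f s = γ(volume({f^p ≥ s} ∩ [0,1]))`, the layer function of `f^p`. -/
noncomputable def Hp (γ : ℝ → ℝ) (p : ℝ) (f : ℝ → ℝ) (s : ℝ) : ℝ :=
  γ (volume ({t | s ≤ f t ^ p} ∩ Icc 0 1)).toReal

/-- `Ip` is the `p`-th power of the Choquet `L_p` norm of `f`. -/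
noncomputable def Ip (γ : ℝ → ℝ) (p : ℝ) (f : ℝ → ℝ) : ℝ := ∫ s in Ioi (0:ℝ), Hp γ p f s

lemma Hp_eq_G (γ : ℝ → ℝ) (p : ℝ) (f : ℝ → ℝ) (s : ℝ) :
    Hp γ p f s = G γ (fun t => f t ^ p) 1 s := rfl

lemma Hp_nonneg (hγmono : MonotoneOn γ (Icc 0 1)) (hγ0 : γ 0 = 0) (p : ℝ) (f : ℝ → ℝ)
    (s : ℝ) : 0 ≤ Hp γ p f s :=
  G_nonneg hγmono hγ0 (right_mem_Icc.2 zero_le_one) s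

lemma Ip_nonneg (hγmono : MonotoneOn γ (Icc 0 1)) (hγ0 : γ 0 = 0) (p : ℝ) (f : ℝ → ℝ) :
    0 ≤ Ip γ p f :=
  setIntegral_nonneg measurableSet_Ioi fun s _ => Hp_nonneg hγmono hγ0 p f s

/-- Tail bound for antitone nonnegative integrable functions on `(0,∞)`. -/
lemma antitone_layer_le {H : ℝ → ℝ} (hanti : Antitone H) (hnn : ∀ s, 0 ≤ H s)
    (hint : IntegrableOn H (Ioi (0:ℝ))) {s : ℝ} (hs : 0 < s) :
    H s ≤ (∫ u in Ioi (0:ℝ), H u) / s := by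
  rw [le_div_iff₀ hs]
  have h1 : H s * s = ∫ _ in Ioc (0:ℝ) s, H s := by
    rw [setIntegral_const]
    simp [Real.volume_Ioc, ENNReal.toReal_ofReal hs.le, mul_comm, max_eq_left hs.le]
  rw [h1]
  have hsub : Ioc (0:ℝ) s ⊆ Ioi 0 := Ioc_subset_Ioi_self
  have h2 : (∫ u in Ioc (0:ℝ) s, H s) ≤ ∫ u in Ioc (0:ℝ) s, H u := by
    refine setIntegral_mono_on (integrableOn_const (by simp [Real.volume_Ioc]))
      (hint.mono_set hsub) measurableSet_Ioc ?_
    intro u hu; exact hanti hu.2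
  have h3 : (∫ u in Ioc (0:ℝ) s, H u) ≤ ∫ u in Ioi (0:ℝ), H u := by
    refine setIntegral_mono_set hint ?_ (HasSubset.Subset.eventuallyLE hsub)
    exact Eventually.of_forall fun u => hnn u
  linarith

lemma Hp_antitone (hγmono : MonotoneOn γ (Icc 0 1)) (p : ℝ) (f : ℝ → ℝ) :
    Antitone (Hp γ p f) :=
  G_antitone hγmono (right_mem_Icc.2 zero_le_one) (f := fun t => f t ^ p)

/-- For `β > 0`, `G γ f x β = Hp γ p f (β ^ p)`. -/
lemma G_eq_Hp (γ : ℝ → ℝ) {p : ℝ} (hp : 0 < p) {f : ℝ → ℝ} (hf : ∀ t, 0 ≤ f t)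
    {β : ℝ} (hβ : 0 < β) : G γ f 1 β = Hp γ p f (β ^ p) := by
  have hset : {t | β ≤ f t} = {t | β ^ p ≤ f t ^ p} := by
    ext t
    show β ≤ f t ↔ β ^ p ≤ f t ^ p
    exact (Real.rpow_le_rpow_iff hβ.le (hf t) hp).symm
  unfold G Hp
  rw [hset]

/-- Key pointwise decay bound: `G γ f x β ≤ Ip/β^p` for `β > 0`. -/
lemma G_le_Ip_div (hγmono : MonotoneOn γ (Icc 0 1)) (hγ0 : γ 0 = 0)
    {p : ℝ} (hp : 0 < p) {f : ℝ → ℝ} (hf : ∀ t, 0 ≤ f t)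
    (hint : IntegrableOn (Hp γ p f) (Ioi (0:ℝ)))
    {x : ℝ} (hx : x ∈ Icc (0:ℝ) 1) {β : ℝ} (hβ : 0 < β) :
    G γ f x β ≤ Ip γ p f / β ^ p := by
  have h1 : G γ f x β ≤ G γ f 1 β :=
    G_mono_x hγmono hx (right_mem_Icc.2 zero_le_one) hx.2 β
  rw [G_eq_Hp γ hp hf hβ] at h1
  have h2 := antitone_layer_le (Hp_antitone hγmono p f)
    (Hp_nonneg hγmono hγ0 p f) hint (Real.rpow_pos_of_pos hβ p)
  exact h1.trans h2

/-- Any antitone function bounded between `0` and `C` is integrable on a bounded interval. -/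
lemma integrableOn_Ioc_of_antitone {h : ℝ → ℝ} (hanti : Antitone h) {C : ℝ}
    (h0 : ∀ β, 0 ≤ h β) (h1 : ∀ β, h β ≤ C) (a b : ℝ) : IntegrableOn h (Ioc a b) := by
  refine Measure.integrableOn_of_bounded (s := Ioc a b) (by simp [Real.volume_Ioc]) 
    hanti.measurable.aestronglyMeasurable (M := C) ?_
  refine Eventually.of_forall fun β => ?_
  rw [Real.norm_eq_abs, abs_of_nonneg (h0 β)]
  exact h1 β

lemma integrableOn_G_Ioc (hγmono : MonotoneOn γ (Icc 0 1)) (hγ0 : γ 0 = 0)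
    {f : ℝ → ℝ} {x : ℝ} (hx : x ∈ Icc (0:ℝ) 1) (a b : ℝ) :
    IntegrableOn (G γ f x) (Ioc a b) :=
  integrableOn_Ioc_of_antitone (G_antitone hγmono hx) (G_nonneg hγmono hγ0 hx)
    (G_le_one hγmono hx) a b

/-- `G γ f x` is integrable on `(0, ∞)`. -/
lemma integrableOn_G (hγmono : MonotoneOn γ (Icc 0 1)) (hγ0 : γ 0 = 0)
    {p : ℝ} (hp : 1 < p) {f : ℝ → ℝ} (hf : ∀ t, 0 ≤ f t)
    (hint : IntegrableOn (Hp γ p f) (Ioi (0:ℝ)))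
    {x : ℝ} (hx : x ∈ Icc (0:ℝ) 1) : IntegrableOn (G γ f x) (Ioi (0:ℝ)) := by
  rw [← Ioc_union_Ioi_eq_Ioi (zero_le_one : (0:ℝ) ≤ 1)]
  refine (integrableOn_G_Ioc hγmono hγ0 hx 0 1).union ?_
  have hrp : IntegrableOn (fun β : ℝ => Ip γ p f * β ^ (-p)) (Ioi (1:ℝ)) :=
    (integrableOn_Ioi_rpow_of_lt (by linarith) one_pos).const_mul _
  refine hrp.mono' (G_measurable hγmono hx).aestronglyMeasurable ?_
  refine (ae_restrict_mem measurableSet_Ioi).mono fun β hβ => ?_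
  have hβ1 : (1:ℝ) < β := hβ
  have hβ0 : (0:ℝ) < β := lt_trans one_pos hβ1
  rw [Real.norm_eq_abs, abs_of_nonneg (G_nonneg hγmono hγ0 hx β)]
  calc G γ f x β ≤ Ip γ p f / β ^ p :=
        G_le_Ip_div hγmono hγ0 (by linarith : 0 < p) hf hint hx hβ0
    _ = Ip γ p f * β ^ (-p) := by
        rw [Real.rpow_neg hβ0.le, div_eq_mul_inv]

lemma integral_rpow_tail {p : ℝ} (hp : 1 < p) {B : ℝ} (hB : 0 < B) :
    (∫ β in Ioi B, β ^ (-p)) = B ^ (1 - p) / (p - 1) := by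
  rw [integral_Ioi_rpow_of_lt (by linarith) hB]
  rw [show -p + 1 = 1 - p by ring]
  rw [div_eq_div_iff (by linarith) (by linarith)]
  ring

/-- Tail estimate for the integral of `G`. -/
lemma tail_bound (hγmono : MonotoneOn γ (Icc 0 1)) (hγ0 : γ 0 = 0)
    {p : ℝ} (hp : 1 < p) {f : ℝ → ℝ} (hf : ∀ t, 0 ≤ f t)
    (hint : IntegrableOn (Hp γ p f) (Ioi (0:ℝ)))
    {x : ℝ} (hx : x ∈ Icc (0:ℝ) 1) {B : ℝ} (hB : 0 < B) :
    (∫ β in Ioi B, G γ f x β) ≤ Ip γ p f * B ^ (1 - p) / (p - 1) := by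
  have hsub : Ioi B ⊆ Ioi (0:ℝ) := Ioi_subset_Ioi hB.le
  have hGi : IntegrableOn (G γ f x) (Ioi B) :=
    (integrableOn_G hγmono hγ0 hp hf hint hx).mono_set hsub
  have hrp : IntegrableOn (fun β : ℝ => Ip γ p f * β ^ (-p)) (Ioi B) :=
    (integrableOn_Ioi_rpow_of_lt (by linarith) hB).const_mul _
  have h1 : (∫ β in Ioi B, G γ f x β) ≤ ∫ β in Ioi B, Ip γ p f * β ^ (-p) := by
    refine setIntegral_mono_on hGi hrp measurableSet_Ioi fun β hβ => ?_
    have hβ0 : (0:ℝ) < β := lt_trans hB hβ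
    calc G γ f x β ≤ Ip γ p f / β ^ p :=
          G_le_Ip_div hγmono hγ0 (by linarith : 0 < p) hf hint hx hβ0
      _ = Ip γ p f * β ^ (-p) := by rw [Real.rpow_neg hβ0.le, div_eq_mul_inv]
  calc (∫ β in Ioi B, G γ f x β) ≤ ∫ β in Ioi B, Ip γ p f * β ^ (-p) := h1
    _ = Ip γ p f * ∫ β in Ioi B, β ^ (-p) := integral_const_mul _ _
    _ = Ip γ p f * B ^ (1 - p) / (p - 1) := by
        rw [integral_rpow_tail hp hB, mul_div_assoc]

/-- The Volterra–Choquet operator as an integral over `(0,∞)`. -/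
noncomputable def F (γ f : ℝ → ℝ) (x : ℝ) : ℝ := ∫ β in Ioi (0:ℝ), G γ f x β

lemma F_nonneg (hγmono : MonotoneOn γ (Icc 0 1)) (hγ0 : γ 0 = 0)
    {f : ℝ → ℝ} {x : ℝ} (hx : x ∈ Icc (0:ℝ) 1) : 0 ≤ F γ f x :=
  setIntegral_nonneg measurableSet_Ioi fun β _ => G_nonneg hγmono hγ0 hx β

lemma F_split (hγmono : MonotoneOn γ (Icc 0 1)) (hγ0 : γ 0 = 0)
    {p : ℝ} (hp : 1 < p) {f : ℝ → ℝ} (hf : ∀ t, 0 ≤ f t)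
    (hint : IntegrableOn (Hp γ p f) (Ioi (0:ℝ)))
    {x : ℝ} (hx : x ∈ Icc (0:ℝ) 1) {B : ℝ} (hB : 0 < B) :
    F γ f x = (∫ β in Ioc (0:ℝ) B, G γ f x β) + ∫ β in Ioi B, G γ f x β := by
  unfold F
  rw [← Ioc_union_Ioi_eq_Ioi hB.le]
  exact setIntegral_union Ioc_disjoint_Ioi_same measurableSet_Ioi
    (integrableOn_G_Ioc hγmono hγ0 hx 0 B)
    (((integrableOn_G hγmono hγ0 hp hf hint hx)).mono_set (Ioi_subset_Ioi hB.le))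

lemma int_Ioc_le_F (hγmono : MonotoneOn γ (Icc 0 1)) (hγ0 : γ 0 = 0)
    {p : ℝ} (hp : 1 < p) {f : ℝ → ℝ} (hf : ∀ t, 0 ≤ f t)
    (hint : IntegrableOn (Hp γ p f) (Ioi (0:ℝ)))
    {x : ℝ} (hx : x ∈ Icc (0:ℝ) 1) (b : ℝ) :
    (∫ β in Ioc (0:ℝ) b, G γ f x β) ≤ F γ f x := by
  refine setIntegral_mono_set (integrableOn_G hγmono hγ0 hp hf hint hx)
    (Eventually.of_forall fun β => G_nonneg hγmono hγ0 hx β)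
    (HasSubset.Subset.eventuallyLE Ioc_subset_Ioi_self)

/-- The key comparison estimate between `F γ f x` and `F γ g x`. -/
lemma key_est (hγmono : MonotoneOn γ (Icc 0 1)) (hγconc : ConcaveOn ℝ (Icc 0 1) γ)
    (hγ0 : γ 0 = 0) {p : ℝ} (hp : 1 < p) {f g : ℝ → ℝ}
    (hfnn : ∀ t, 0 ≤ f t) (hgnn : ∀ t, 0 ≤ g t)
    (hfint : IntegrableOn (Hp γ p f) (Ioi (0:ℝ)))
    (hgint : IntegrableOn (Hp γ p g) (Ioi (0:ℝ)))
    {x α B : ℝ} (hx : x ∈ Icc (0:ℝ) 1) (hα : 0 < α) (hαB : α ≤ B) :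
    F γ f x ≤ F γ g x + α * γ 1 + B * G γ (fun t => |f t - g t|) 1 α
      + ∫ β in Ioi B, G γ f x β := by
  have hB0 : 0 < B := hα.trans_le hαB
  set D := G γ (fun t => |f t - g t|) 1 α with hD
  have hDval : D = γ (volume ({t | α ≤ |f t - g t|} ∩ Icc 0 1)).toReal := rfl
  -- pointwise estimate on (0, B]
  have hpt : ∀ β ∈ Ioc (0:ℝ) B, G γ f x β ≤ G γ g x (β - α) + D := by
    intro β _
    rw [hDval]
    show γ (volume ({t | β ≤ f t} ∩ Icc 0 x)).toReal ≤ _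
    refine gamma_vol_subadd hγmono hγconc hγ0 ?_ (G_set_subset hx β)
      (G_set_subset hx (β - α)) inter_subset_right
    rintro t ⟨ht1, ht2⟩
    by_cases hc : α ≤ f t - g t
    · exact Or.inr ⟨le_trans hc (le_abs_self _), Icc_subset_Icc le_rfl hx.2 ht2⟩
    · push_neg at hc
      exact Or.inl ⟨by simp only [mem_setOf_eq] at ht1 ⊢; linarith, ht2⟩
  -- the shifted function is integrable
  have hshift_anti : Antitone (fun β => G γ g x (β - α)) := by
    intro b b' hbb'
    exact G_antitone hγmono hx (by linarith)
  have hshift_int : IntegrableOn (fun β => G γ g x (β - α)) (Ioc (0:ℝ) B) :=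
    integrableOn_Ioc_of_antitone hshift_anti (fun β => G_nonneg hγmono hγ0 hx _)
      (fun β => G_le_one hγmono hx _) 0 B
  have hconst_int : IntegrableOn (fun _ : ℝ => D) (Ioc (0:ℝ) B) :=
    integrableOn_const (by simp [Real.volume_Ioc])
  have h2 : (∫ β in Ioc (0:ℝ) B, G γ f x β)
      ≤ ∫ β in Ioc (0:ℝ) B, (G γ g x (β - α) + D) := by
    refine setIntegral_mono_on (integrableOn_G_Ioc hγmono hγ0 hx 0 B)
      (hshift_int.add hconst_int) measurableSet_Ioc hpt
  have h3 : (∫ β in Ioc (0:ℝ) B, (G γ g x (β - α) + D))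
      = (∫ β in Ioc (0:ℝ) B, G γ g x (β - α)) + B * D := by
    rw [integral_add hshift_int hconst_int, setIntegral_const]
    simp [Real.volume_Ioc, ENNReal.toReal_ofReal hB0.le, smul_eq_mul, hB0.le]
  have h4 : (∫ β in Ioc (0:ℝ) B, G γ g x (β - α))
      = ∫ β in Ioc (-α) (B - α), G γ g x β := by
    calc (∫ β in Ioc (0:ℝ) B, G γ g x (β - α))
        = ∫ β in (0:ℝ)..B, G γ g x (β - α) :=
          (intervalIntegral.integral_of_le hB0.le).symm
      _ = ∫ β in (0 - α)..(B - α), G γ g x β :=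
          intervalIntegral.integral_comp_sub_right _ α
      _ = ∫ β in Ioc (0 - α) (B - α), G γ g x β :=
          intervalIntegral.integral_of_le (by linarith)
      _ = ∫ β in Ioc (-α) (B - α), G γ g x β := by rw [zero_sub]
  have h5 : (∫ β in Ioc (-α) (B - α), G γ g x β)
      = (∫ β in Ioc (-α) (0:ℝ), G γ g x β) + ∫ β in Ioc (0:ℝ) (B - α), G γ g x β := by
    rw [← Ioc_union_Ioc_eq_Ioc (by linarith : -α ≤ (0:ℝ)) (by linarith : (0:ℝ) ≤ B - α)]
    exact setIntegral_union (Ioc_disjoint_Ioc_of_le le_rfl) measurableSet_Ioc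
      (integrableOn_G_Ioc hγmono hγ0 hx _ _) (integrableOn_G_Ioc hγmono hγ0 hx _ _)
  have h6 : (∫ β in Ioc (-α) (0:ℝ), G γ g x β) ≤ α * γ 1 := by
    have heq : (∫ β in Ioc (-α) (0:ℝ), G γ g x β)
        = α * γ (volume (Icc (0:ℝ) x)).toReal := by
      rw [setIntegral_congr_fun measurableSet_Ioc
        (g := fun _ => γ (volume (Icc (0:ℝ) x)).toReal)
        (fun β hβ => G_nonpos_eq hgnn hβ.2)]
      rw [setIntegral_const]
      simp [Real.volume_Ioc, ENNReal.toReal_ofReal hα.le, smul_eq_mul, hα.le]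
    rw [heq]
    have hxm : (volume (Icc (0:ℝ) x)).toReal ∈ Icc (0:ℝ) 1 :=
      vol_mem (Icc_subset_Icc le_rfl hx.2)
    have : γ (volume (Icc (0:ℝ) x)).toReal ≤ γ 1 :=
      hγmono hxm (right_mem_Icc.2 zero_le_one) hxm.2
    exact mul_le_mul_of_nonneg_left this hα.le
  have h7 : (∫ β in Ioc (0:ℝ) (B - α), G γ g x β) ≤ F γ g x :=
    int_Ioc_le_F hγmono hγ0 hp hgnn hgint hx _
  have hfs := F_split hγmono hγ0 hp hfnn hfint hx hB0
  linarith

/-- Increment estimate in the space variable. -/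
lemma incr_est (hγmono : MonotoneOn γ (Icc 0 1)) (hγconc : ConcaveOn ℝ (Icc 0 1) γ)
    (hγ0 : γ 0 = 0) {p : ℝ} (hp : 1 < p) {f : ℝ → ℝ}
    (hfnn : ∀ t, 0 ≤ f t) (hfint : IntegrableOn (Hp γ p f) (Ioi (0:ℝ)))
    {x y B : ℝ} (hx : x ∈ Icc (0:ℝ) 1) (hy : y ∈ Icc (0:ℝ) 1) (hxy : x ≤ y) (hB : 0 < B) :
    F γ f y ≤ F γ f x + B * γ (y - x) + ∫ β in Ioi B, G γ f y β := by
  have hvol : (volume (Icc x y)).toReal = y - x := by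
    rw [Real.volume_Icc, ENNReal.toReal_ofReal (by linarith)]
  have hpt : ∀ β ∈ Ioc (0:ℝ) B, G γ f y β ≤ G γ f x β + γ (y - x) := by
    intro β _
    have h := gamma_vol_subadd hγmono hγconc hγ0
      (S := {t | β ≤ f t} ∩ Icc 0 y) (A := {t | β ≤ f t} ∩ Icc 0 x) (B := Icc x y)
      ?_ (G_set_subset hy β) (G_set_subset hx β) (Icc_subset_Icc hx.1 hy.2)
    · rw [hvol] at h; exact h
    · rintro t ⟨ht1, ht2⟩
      by_cases hc : t ≤ x
      · exact Or.inl ⟨ht1, ht2.1, hc⟩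
      · push_neg at hc
        exact Or.inr ⟨hc.le, ht2.2⟩
  have hconst_int : IntegrableOn (fun _ : ℝ => γ (y - x)) (Ioc (0:ℝ) B) :=
    integrableOn_const (by simp [Real.volume_Ioc])
  have h2 : (∫ β in Ioc (0:ℝ) B, G γ f y β)
      ≤ ∫ β in Ioc (0:ℝ) B, (G γ f x β + γ (y - x)) :=
    setIntegral_mono_on (integrableOn_G_Ioc hγmono hγ0 hy 0 B)
      ((integrableOn_G_Ioc hγmono hγ0 hx 0 B).add hconst_int) measurableSet_Ioc hpt
  have h3 : (∫ β in Ioc (0:ℝ) B, (G γ f x β + γ (y - x)))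
      = (∫ β in Ioc (0:ℝ) B, G γ f x β) + B * γ (y - x) := by
    rw [integral_add (integrableOn_G_Ioc hγmono hγ0 hx 0 B) hconst_int, setIntegral_const]
    simp [Real.volume_Ioc, ENNReal.toReal_ofReal hB.le, smul_eq_mul, hB.le]
  have h4 : (∫ β in Ioc (0:ℝ) B, G γ f x β) ≤ F γ f x :=
    int_Ioc_le_F hγmono hγ0 hp hfnn hfint hx _
  have hfs := F_split hγmono hγ0 hp hfnn hfint hy hB
  linarith

lemma F_mono_x (hγmono : MonotoneOn γ (Icc 0 1)) (hγ0 : γ 0 = 0)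
    {p : ℝ} (hp : 1 < p) {f : ℝ → ℝ} (hfnn : ∀ t, 0 ≤ f t)
    (hfint : IntegrableOn (Hp γ p f) (Ioi (0:ℝ)))
    {x y : ℝ} (hx : x ∈ Icc (0:ℝ) 1) (hy : y ∈ Icc (0:ℝ) 1) (hxy : x ≤ y) :
    F γ f x ≤ F γ f y :=
  setIntegral_mono_on (integrableOn_G hγmono hγ0 hp hfnn hfint hx)
    (integrableOn_G hγmono hγ0 hp hfnn hfint hy) measurableSet_Ioi
    (fun β _ => G_mono_x hγmono hx hy hxy β)

lemma abs_le_max {a b : ℝ} (ha : 0 ≤ a) (hb : 0 ≤ b) : |a - b| ≤ max a b := by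
  rcases le_total b a with h | h
  · rw [abs_of_nonneg (by linarith)]; exact le_trans (by linarith) (le_max_left a b)
  · rw [abs_of_nonpos (by linarith)]; exact le_trans (by linarith) (le_max_right a b)

lemma Hp_abs_le (hγmono : MonotoneOn γ (Icc 0 1)) (hγconc : ConcaveOn ℝ (Icc 0 1) γ)
    (hγ0 : γ 0 = 0) {p : ℝ} (hp : 0 < p) {f g : ℝ → ℝ}
    (hfnn : ∀ t, 0 ≤ f t) (hgnn : ∀ t, 0 ≤ g t) (s : ℝ) :
    Hp γ p (fun t => |f t - g t|) s ≤ Hp γ p f s + Hp γ p g s := by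
  refine gamma_vol_subadd hγmono hγconc hγ0 ?_ inter_subset_right
    inter_subset_right inter_subset_right
  rintro t ⟨ht1, ht2⟩
  simp only [mem_setOf_eq] at ht1
  have h1 : |f t - g t| ≤ max (f t) (g t) := abs_le_max (hfnn t) (hgnn t)
  have h2 : |f t - g t| ^ p ≤ max (f t) (g t) ^ p :=
    Real.rpow_le_rpow (abs_nonneg _) h1 hp.le
  have h3 : max (f t) (g t) ^ p ≤ max (f t ^ p) (g t ^ p) := by
    rcases le_total (f t) (g t) with h | h
    · rw [max_eq_right h]; exact le_max_right _ _
    · rw [max_eq_left h]; exact le_max_left _ _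
  have : s ≤ max (f t ^ p) (g t ^ p) := le_trans ht1 (le_trans h2 h3)
  rcases le_max_iff.1 this with h | h
  · exact Or.inl ⟨h, ht2⟩
  · exact Or.inr ⟨h, ht2⟩

lemma Hp_abs_int (hγmono : MonotoneOn γ (Icc 0 1)) (hγconc : ConcaveOn ℝ (Icc 0 1) γ)
    (hγ0 : γ 0 = 0) {p : ℝ} (hp : 0 < p) {f g : ℝ → ℝ}
    (hfnn : ∀ t, 0 ≤ f t) (hgnn : ∀ t, 0 ≤ g t)
    (hfint : IntegrableOn (Hp γ p f) (Ioi (0:ℝ)))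
    (hgint : IntegrableOn (Hp γ p g) (Ioi (0:ℝ))) :
    IntegrableOn (Hp γ p (fun t => |f t - g t|)) (Ioi (0:ℝ)) := by
  refine (hfint.add hgint).mono'
    (Hp_antitone hγmono p _).measurable.aestronglyMeasurable ?_
  refine Eventually.of_forall fun s => ?_
  rw [Real.norm_eq_abs, abs_of_nonneg (Hp_nonneg hγmono hγ0 p _ s)]
  exact Hp_abs_le hγmono hγconc hγ0 hp hfnn hgnn s

lemma G_g_pointwise (hγmono : MonotoneOn γ (Icc 0 1)) (hγconc : ConcaveOn ℝ (Icc 0 1) γ)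
    (hγ0 : γ 0 = 0) {f g : ℝ → ℝ} {x : ℝ} (hx : x ∈ Icc (0:ℝ) 1) (β : ℝ) :
    G γ g x β ≤ G γ f 1 (β / 2) + G γ (fun t => |f t - g t|) 1 (β / 2) := by
  refine gamma_vol_subadd hγmono hγconc hγ0 ?_ (G_set_subset hx β)
    inter_subset_right inter_subset_right
  rintro t ⟨ht1, ht2⟩
  simp only [mem_setOf_eq] at ht1
  have ht2' : t ∈ Icc (0:ℝ) 1 := Icc_subset_Icc le_rfl hx.2 ht2
  by_cases hc : β / 2 ≤ f t
  · exact Or.inl ⟨hc, ht2'⟩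
  · push_neg at hc
    refine Or.inr ⟨?_, ht2'⟩
    show β / 2 ≤ |f t - g t|
    rw [abs_sub_comm]
    calc β / 2 ≤ g t - f t := by linarith
      _ ≤ |g t - f t| := le_abs_self _

/-- Tail estimate for `g` in terms of `Ip` of `f` and `Ip` of `|f - g|`. -/
lemma tail_bound_2 (hγmono : MonotoneOn γ (Icc 0 1)) (hγconc : ConcaveOn ℝ (Icc 0 1) γ)
    (hγ0 : γ 0 = 0) {p : ℝ} (hp : 1 < p) {f g : ℝ → ℝ}
    (hfnn : ∀ t, 0 ≤ f t) (hgnn : ∀ t, 0 ≤ g t)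
    (hfint : IntegrableOn (Hp γ p f) (Ioi (0:ℝ)))
    (hgint : IntegrableOn (Hp γ p g) (Ioi (0:ℝ)))
    {x : ℝ} (hx : x ∈ Icc (0:ℝ) 1) {B : ℝ} (hB : 0 < B) :
    (∫ β in Ioi B, G γ g x β)
      ≤ (Ip γ p f + Ip γ p (fun t => |f t - g t|)) * 2 ^ p * B ^ (1 - p) / (p - 1) := by
  have hp0 : (0:ℝ) < p := by linarith
  have habs_nn : ∀ t, 0 ≤ |f t - g t| := fun t => abs_nonneg _
  have habs_int := Hp_abs_int hγmono hγconc hγ0 hp0 hfnn hgnn hfint hgint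
  set c := (Ip γ p f + Ip γ p (fun t => |f t - g t|)) * 2 ^ p with hc
  have hGi : IntegrableOn (G γ g x) (Ioi B) :=
    (integrableOn_G hγmono hγ0 hp hgnn hgint hx).mono_set (Ioi_subset_Ioi hB.le)
  have hrp : IntegrableOn (fun β : ℝ => c * β ^ (-p)) (Ioi B) :=
    (integrableOn_Ioi_rpow_of_lt (by linarith) hB).const_mul _
  have h1 : (∫ β in Ioi B, G γ g x β) ≤ ∫ β in Ioi B, c * β ^ (-p) := by
    refine setIntegral_mono_on hGi hrp measurableSet_Ioi fun β hβ => ?_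
    have hβ0 : (0:ℝ) < β := lt_trans hB hβ
    have hβ2 : (0:ℝ) < β / 2 := by linarith
    have e1 : G γ f 1 (β / 2) ≤ Ip γ p f / (β / 2) ^ p :=
      G_le_Ip_div hγmono hγ0 hp0 hfnn hfint (right_mem_Icc.2 zero_le_one) hβ2
    have e2 : G γ (fun t => |f t - g t|) 1 (β / 2)
        ≤ Ip γ p (fun t => |f t - g t|) / (β / 2) ^ p :=
      G_le_Ip_div hγmono hγ0 hp0 habs_nn habs_int (right_mem_Icc.2 zero_le_one) hβ2
    have e3 := G_g_pointwise hγmono hγconc hγ0 (f := f) (g := g) hx β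
    have h2p : ((β:ℝ) / 2) ^ p = β ^ p / 2 ^ p := Real.div_rpow hβ0.le (by norm_num : (0:ℝ) ≤ 2) p
    have hβp : (0:ℝ) < β ^ p := Real.rpow_pos_of_pos hβ0 p
    have h2pp : (0:ℝ) < (2:ℝ) ^ p := Real.rpow_pos_of_pos (by norm_num) p
    have hcalc : Ip γ p f / (β / 2) ^ p + Ip γ p (fun t => |f t - g t|) / (β / 2) ^ p
        = c * β ^ (-p) := by
      rw [h2p, Real.rpow_neg hβ0.le, hc]
      field_simp
    linarith
  calc (∫ β in Ioi B, G γ g x β) ≤ ∫ β in Ioi B, c * β ^ (-p) := h1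
    _ = c * ∫ β in Ioi B, β ^ (-p) := integral_const_mul _ _
    _ = c * B ^ (1 - p) / (p - 1) := by rw [integral_rpow_tail hp hB, mul_div_assoc]

lemma rpow_inv_le {J R p : ℝ} (hJ : 0 ≤ J) (hp : 1 < p) (h : J ^ (1/p) ≤ R) : J ≤ R ^ p := by
  have h0 : (0:ℝ) < p := by linarith
  have h1 : (J ^ (1/p)) ^ p ≤ R ^ p :=
    Real.rpow_le_rpow (Real.rpow_nonneg hJ _) h h0.le
  rwa [← Real.rpow_mul hJ, one_div, inv_mul_cancel₀ h0.ne', Real.rpow_one] at h1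

lemma rpow_inv_lt {J δ p : ℝ} (hJ : 0 ≤ J) (hp : 1 < p) (h : J ^ (1/p) < δ) : J < δ ^ p := by
  have h0 : (0:ℝ) < p := by linarith
  have h1 : (J ^ (1/p)) ^ p < δ ^ p :=
    Real.rpow_lt_rpow (Real.rpow_nonneg hJ _) h h0
  rwa [← Real.rpow_mul hJ, one_div, inv_mul_cancel₀ h0.ne', Real.rpow_one] at h1

/-- Uniform bound on `F`. -/
lemma F_le_bound (hγmono : MonotoneOn γ (Icc 0 1)) (hγ0 : γ 0 = 0)
    {p : ℝ} (hp : 1 < p) {f : ℝ → ℝ} (hfnn : ∀ t, 0 ≤ f t)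
    (hfint : IntegrableOn (Hp γ p f) (Ioi (0:ℝ)))
    {x : ℝ} (hx : x ∈ Icc (0:ℝ) 1) :
    F γ f x ≤ γ 1 + Ip γ p f / (p - 1) := by
  have hfs := F_split hγmono hγ0 hp hfnn hfint hx one_pos
  have h1 : (∫ β in Ioc (0:ℝ) 1, G γ f x β) ≤ γ 1 := by
    have : (∫ β in Ioc (0:ℝ) 1, G γ f x β) ≤ ∫ _ in Ioc (0:ℝ) 1, γ 1 :=
      setIntegral_mono_on (integrableOn_G_Ioc hγmono hγ0 hx 0 1)
        (integrableOn_const (by simp [Real.volume_Ioc]))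
        measurableSet_Ioc (fun β _ => G_le_one hγmono hx β)
    rw [setIntegral_const] at this
    simpa [Real.volume_Ioc] using this
  have h2 := tail_bound hγmono hγ0 hp hfnn hfint hx one_pos
  rw [Real.one_rpow, mul_one] at h2
  linarith

lemma one_le_two_rpow {p : ℝ} (hp : 0 ≤ p) : (1:ℝ) ≤ 2 ^ p := by
  have := Real.rpow_le_rpow_of_exponent_le (one_le_two) hp
  rwa [Real.rpow_zero] at this

lemma exists_B {p : ℝ} (hp : 1 < p) (C : ℝ) {ε : ℝ} (hε : 0 < ε) :
    ∃ B : ℝ, 1 ≤ B ∧ C * B ^ (1 - p) / (p - 1) < ε := by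
  have htend : Tendsto (fun B : ℝ => C * B ^ (1 - p) / (p - 1)) atTop (𝓝 0) := by
    have h1 : Tendsto (fun B : ℝ => B ^ (-(p - 1))) atTop (𝓝 0) :=
      tendsto_rpow_neg_atTop (by linarith)
    have h2 : Tendsto (fun B : ℝ => C * B ^ (-(p - 1)) / (p - 1)) atTop
        (𝓝 (C * 0 / (p - 1))) := (h1.const_mul C).div_const _
    simpa [show -(p - 1) = 1 - p by ring] using h2
  exact ((htend.eventually_lt_const hε).and (eventually_ge_atTop 1)).exists.imp
    fun B hB => ⟨hB.2, hB.1⟩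

/-- A uniform continuity modulus for `F`, depending only on a bound for `Ip`. -/
lemma modulus (hγmono : MonotoneOn γ (Icc 0 1)) (hγconc : ConcaveOn ℝ (Icc 0 1) γ)
    (hγcont : ContinuousOn γ (Icc 0 1)) (hγ0 : γ 0 = 0)
    {p : ℝ} (hp : 1 < p) (C : ℝ) {ε : ℝ} (hε : 0 < ε) :
    ∃ δ > 0, ∀ f : ℝ → ℝ, (∀ t, 0 ≤ f t) → IntegrableOn (Hp γ p f) (Ioi (0:ℝ)) →
      Ip γ p f ≤ C → ∀ x ∈ Icc (0:ℝ) 1, ∀ y ∈ Icc (0:ℝ) 1, |x - y| < δ →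
      |F γ f x - F γ f y| < ε := by
  obtain ⟨B, hB1, hBtail⟩ := exists_B hp C (half_pos hε)
  have hB0 : (0:ℝ) < B := lt_of_lt_of_le one_pos hB1
  have hγc : ContinuousWithinAt γ (Icc 0 1) 0 := hγcont 0 ⟨le_rfl, zero_le_one⟩
  rw [Metric.continuousWithinAt_iff] at hγc
  obtain ⟨δ, hδ0, hδ⟩ := hγc (ε / (2 * B)) (by positivity)
  refine ⟨δ, hδ0, ?_⟩
  intro f hfnn hfint hfC
  have main : ∀ x ∈ Icc (0:ℝ) 1, ∀ y ∈ Icc (0:ℝ) 1, x ≤ y → y - x < δ →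
      |F γ f x - F γ f y| < ε := by
    intro x hx y hy hle hlt
    have hmono := F_mono_x hγmono hγ0 hp hfnn hfint hx hy hle
    have hyx : y - x ∈ Icc (0:ℝ) 1 := ⟨by linarith [hx.1], by linarith [hx.1, hy.2]⟩
    have hγyx : γ (y - x) < ε / (2 * B) := by
      have h := hδ hyx (by
        rw [Real.dist_eq, sub_zero, abs_of_nonneg (by linarith [hx.1] : (0:ℝ) ≤ y - x)]
        exact hlt)
      rwa [Real.dist_eq, hγ0, sub_zero,
        abs_of_nonneg (gamma_nonneg hγmono hγ0 hyx)] at h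
    have hincr := incr_est hγmono hγconc hγ0 hp hfnn hfint hx hy hle hB0
    have htail := tail_bound hγmono hγ0 hp hfnn hfint hy hB0
    have htail2 : Ip γ p f * B ^ (1 - p) / (p - 1) ≤ C * B ^ (1 - p) / (p - 1) := by
      gcongr <;> first
        | linarith
        | exact (Real.rpow_pos_of_pos hB0 _).le
    have hBγ : B * γ (y - x) < ε / 2 := by
      have h1 : B * γ (y - x) < B * (ε / (2 * B)) :=
        mul_lt_mul_of_pos_left hγyx hB0
      have h2 : B * (ε / (2 * B)) = ε / 2 := by field_simp
      linarith
    rw [abs_sub_comm, abs_of_nonneg (sub_nonneg.2 hmono)]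
    linarith
  intro x hx y hy hxy
  rcases le_total x y with h | h
  · exact main x hx y hy h (by rwa [abs_sub_comm, abs_of_nonneg (by linarith)] at hxy)
  · rw [abs_sub_comm]
    exact main y hy x hx h (by rwa [abs_of_nonneg (by linarith)] at hxy)

/-- Part 1: continuity and nonnegativity of `V f`. -/
lemma part_one (hγmono : MonotoneOn γ (Icc 0 1)) (hγconc : ConcaveOn ℝ (Icc 0 1) γ)
    (hγcont : ContinuousOn γ (Icc 0 1)) (hγ0 : γ 0 = 0)
    {p : ℝ} (hp : 1 < p) {f : ℝ → ℝ}
    (hf : MemLpPlus (fun A => γ (volume A).toReal) p f) :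
    ContinuousOn (fun x => choquet (fun A => γ (volume A).toReal) (Icc 0 x) f)
      (Icc 0 1) ∧
    ∀ x ∈ Icc (0:ℝ) 1, 0 ≤ choquet (fun A => γ (volume A).toReal) (Icc 0 x) f := by
  have hfnn := hf.2.1
  have hfint : IntegrableOn (Hp γ p f) (Ioi (0:ℝ)) := hf.2.2
  have heq : EqOn (fun x => choquet (fun A => γ (volume A).toReal) (Icc 0 x) f)
      (F γ f) (Icc 0 1) := fun x _ => choquet_eq γ f hfnn x
  constructor
  · refine ContinuousOn.congr ?_ heq
    rw [Metric.continuousOn_iff]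
    intro b hb ε hε
    obtain ⟨δ, hδ0, hδ⟩ := modulus hγmono hγconc hγcont hγ0 hp (Ip γ p f) hε
    refine ⟨δ, hδ0, fun a ha hab => ?_⟩
    rw [Real.dist_eq]
    exact hδ f hfnn hfint le_rfl a ha b hb (by rwa [Real.dist_eq] at hab)
  · intro x hx
    rw [choquet_eq γ f hfnn x]
    exact F_nonneg hγmono hγ0 hx

lemma rpow_one_div_rpow {c p : ℝ} (hc : 0 ≤ c) (hp : p ≠ 0) : (c ^ (1/p)) ^ p = c := by
  rw [← Real.rpow_mul hc, one_div, inv_mul_cancel₀ hp, Real.rpow_one]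

/-- Part 2: continuity of the Volterra–Choquet operator. -/
lemma part_two (hγmono : MonotoneOn γ (Icc 0 1)) (hγconc : ConcaveOn ℝ (Icc 0 1) γ)
    (hγ0 : γ 0 = 0) {p : ℝ} (hp : 1 < p) {f : ℝ → ℝ}
    (hf : MemLpPlus (fun A => γ (volume A).toReal) p f) {ε : ℝ} (hε : 0 < ε) :
    ∃ δ > (0:ℝ), ∀ g : ℝ → ℝ,
      MemLpPlus (fun A => γ (volume A).toReal) p g →
      (choquet (fun A => γ (volume A).toReal) (Icc 0 1)
          (fun t => |f t - g t| ^ p)) ^ (1/p) < δ →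
      ∀ x ∈ Icc (0:ℝ) 1,
        |choquet (fun A => γ (volume A).toReal) (Icc 0 x) f
          - choquet (fun A => γ (volume A).toReal) (Icc 0 x) g| < ε := by
  have hp0 : (0:ℝ) < p := by linarith
  have hfnn := hf.2.1
  have hfint : IntegrableOn (Hp γ p f) (Ioi (0:ℝ)) := hf.2.2
  have hγ1 : 0 ≤ γ 1 := gamma_one_nonneg hγmono hγ0
  have hIf0 : 0 ≤ Ip γ p f := Ip_nonneg hγmono hγ0 p f
  obtain ⟨B, hB1, hBtail⟩ := exists_B hp ((Ip γ p f + 1) * 2 ^ p)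
    (show (0:ℝ) < ε/4 by linarith)
  have hB0 : (0:ℝ) < B := lt_of_lt_of_le one_pos hB1
  set α := min B (ε / (4 * (γ 1 + 1))) with hαdef
  have hα : 0 < α := lt_min hB0 (by positivity)
  have hαB : α ≤ B := min_le_left _ _
  have hαγ : α * γ 1 < ε / 4 := by
    have h1 : α * γ 1 ≤ (ε / (4 * (γ 1 + 1))) * γ 1 :=
      mul_le_mul_of_nonneg_right (min_le_right _ _) hγ1
    have h2 : (ε / (4 * (γ 1 + 1))) * γ 1 < ε / 4 := by
      rw [div_mul_eq_mul_div, div_lt_div_iff₀ (by positivity) (by norm_num)]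
      nlinarith
    linarith
  have hαp : (0:ℝ) < α ^ p := Real.rpow_pos_of_pos hα p
  set c := ε / 4 * α ^ p / B with hcdef
  have hc0 : 0 < c := by positivity
  refine ⟨min 1 (c ^ (1/p)), lt_min one_pos (Real.rpow_pos_of_pos hc0 _), ?_⟩
  set δ := min 1 (c ^ (1/p)) with hδdef
  have hδ0 : 0 < δ := lt_min one_pos (Real.rpow_pos_of_pos hc0 _)
  intro g hg hnorm x hx
  have hgnn := hg.2.1
  have hgint : IntegrableOn (Hp γ p g) (Ioi (0:ℝ)) := hg.2.2
  have habs_nn : ∀ t, 0 ≤ |f t - g t| := fun t => abs_nonneg _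
  have habs_int := Hp_abs_int hγmono hγconc hγ0 hp0 hfnn hgnn hfint hgint
  set J := Ip γ p (fun t => |f t - g t|) with hJdef
  have hJnn : 0 ≤ J := Ip_nonneg hγmono hγ0 p _
  -- identify the choquet norm with J
  have hJeq : choquet (fun A => γ (volume A).toReal) (Icc 0 1)
      (fun t => |f t - g t| ^ p) = J := by
    rw [choquet_eq γ _ (fun t => Real.rpow_nonneg (abs_nonneg _) p) 1]
    rfl
  rw [hJeq] at hnorm
  have hJδ : J < δ ^ p := rpow_inv_lt hJnn hp hnorm
  have hδp1 : δ ^ p ≤ 1 := Real.rpow_le_one hδ0.le (min_le_left _ _) hp0.le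
  have hδpc : δ ^ p ≤ c := by
    have h1 : δ ^ p ≤ (c ^ (1/p)) ^ p :=
      Real.rpow_le_rpow hδ0.le (min_le_right _ _) hp0.le
    rwa [rpow_one_div_rpow hc0.le hp0.ne'] at h1
  have hJc : J < c := lt_of_lt_of_le hJδ hδpc
  have hJ1 : J ≤ 1 := le_of_lt (lt_of_lt_of_le hJδ hδp1)
  -- bound on B * D
  set D := G γ (fun t => |f t - g t|) 1 α with hDdef
  have hD_le : D ≤ J / α ^ p :=
    G_le_Ip_div hγmono hγ0 hp0 habs_nn habs_int (right_mem_Icc.2 zero_le_one) hα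
  have hBD : B * D < ε / 4 := by
    have h1 : B * D ≤ B * (J / α ^ p) := mul_le_mul_of_nonneg_left hD_le hB0.le
    have h2 : B * (J / α ^ p) < B * (c / α ^ p) :=
      mul_lt_mul_of_pos_left (by gcongr) hB0
    have h3 : B * (c / α ^ p) = ε / 4 := by
      rw [hcdef]
      field_simp
    linarith
  -- tail estimates
  have hX : (0:ℝ) ≤ B ^ (1 - p) := (Real.rpow_pos_of_pos hB0 _).le
  have h2p : (1:ℝ) ≤ 2 ^ p := one_le_two_rpow hp0.le
  have htail1 : (∫ β in Ioi B, G γ f x β) < ε / 4 := by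
    have h1 := tail_bound hγmono hγ0 hp hfnn hfint hx hB0
    have hco : Ip γ p f ≤ (Ip γ p f + 1) * 2 ^ p := by nlinarith
    have h2 : Ip γ p f * B ^ (1 - p) / (p - 1)
        ≤ (Ip γ p f + 1) * 2 ^ p * B ^ (1 - p) / (p - 1) := by
      gcongr <;> linarith
    linarith
  have htail2g : (∫ β in Ioi B, G γ g x β) < ε / 4 := by
    have h1 := tail_bound_2 hγmono hγconc hγ0 hp hfnn hgnn hfint hgint hx hB0
    have h2 : (Ip γ p f + J) * 2 ^ p * B ^ (1 - p) / (p - 1)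
        ≤ (Ip γ p f + 1) * 2 ^ p * B ^ (1 - p) / (p - 1) := by
      gcongr <;> linarith
    rw [← hJdef] at h1
    linarith
  -- the two key estimates
  have k1 := key_est hγmono hγconc hγ0 hp hfnn hgnn hfint hgint hx hα hαB
  have k2 := key_est hγmono hγconc hγ0 hp hgnn hfnn hgint hfint hx hα hαB
  have habs_comm : (fun t => |g t - f t|) = (fun t => |f t - g t|) :=
    funext fun t => abs_sub_comm _ _
  rw [habs_comm] at k2
  rw [← hDdef] at k1 k2
  have hgoal : |F γ f x - F γ g x| < ε := by
    rw [abs_sub_lt_iff]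
    constructor <;> linarith
  have e1 : choquet (fun A => γ (volume A).toReal) (Icc 0 x) f = F γ f x :=
    choquet_eq γ f hfnn x
  have e2 : choquet (fun A => γ (volume A).toReal) (Icc 0 x) g = F γ g x :=
    choquet_eq γ g hgnn x
  rw [e1, e2]
  exact hgoal

/-- Part 3: compactness. -/
lemma part_three (hγmono : MonotoneOn γ (Icc 0 1)) (hγconc : ConcaveOn ℝ (Icc 0 1) γ)
    (hγcont : ContinuousOn γ (Icc 0 1)) (hγ0 : γ 0 = 0)
    {p : ℝ} (hp : 1 < p) (R : ℝ) (u : ℕ → ℝ → ℝ)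
    (hu : ∀ n, MemLpPlus (fun A => γ (volume A).toReal) p (u n))
    (hbd : ∀ n, (choquet (fun A => γ (volume A).toReal) (Icc 0 1)
        (fun t => u n t ^ p)) ^ (1/p) ≤ R) :
    ∃ (h : ℝ → ℝ) (φ : ℕ → ℕ), StrictMono φ ∧
      TendstoUniformlyOn
        (fun n x => choquet (fun A => γ (volume A).toReal) (Icc 0 x) (u (φ n)))
        h atTop (Icc 0 1) := by
  have hp0 : (0:ℝ) < p := by linarith
  have hunn : ∀ n t, 0 ≤ u n t := fun n => (hu n).2.1
  have huint : ∀ n, IntegrableOn (Hp γ p (u n)) (Ioi (0:ℝ)) := fun n => (hu n).2.2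
  have hIeq : ∀ n, choquet (fun A => γ (volume A).toReal) (Icc 0 1)
      (fun t => u n t ^ p) = Ip γ p (u n) := fun n => by
    rw [choquet_eq γ _ (fun t => Real.rpow_nonneg (hunn n t) p) 1]; rfl
  have hIR : ∀ n, Ip γ p (u n) ≤ R ^ p := fun n => by
    refine rpow_inv_le (Ip_nonneg hγmono hγ0 p (u n)) hp ?_
    rw [← hIeq n]; exact hbd n
  have hRp0 : (0:ℝ) ≤ R ^ p := le_trans (Ip_nonneg hγmono hγ0 p (u 0)) (hIR 0)
  have hFmem : ∀ n, ∀ x ∈ Icc (0:ℝ) 1,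
      F γ (u n) x ∈ Icc (0:ℝ) (γ 1 + R ^ p / (p - 1)) := by
    intro n x hx
    refine ⟨F_nonneg hγmono hγ0 hx, ?_⟩
    have h1 := F_le_bound hγmono hγ0 hp (hunn n) (huint n) hx
    have h2 : Ip γ p (u n) / (p - 1) ≤ R ^ p / (p - 1) := by
      gcongr
      · exact hIR n
    linarith
  have hFcont : ∀ n, ContinuousOn (F γ (u n)) (Icc (0:ℝ) 1) := by
    intro n
    rw [Metric.continuousOn_iff]
    intro b hb ε hε
    obtain ⟨δ, hδ0, hδ⟩ := modulus hγmono hγconc hγcont hγ0 hp (R ^ p) hε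
    refine ⟨δ, hδ0, fun a ha hab => ?_⟩
    rw [Real.dist_eq]
    exact hδ (u n) (hunn n) (huint n) (hIR n) a ha b hb (by rwa [Real.dist_eq] at hab)
  let g : ℕ → BoundedContinuousFunction ↥(Icc (0:ℝ) 1) ℝ := fun n =>
    BoundedContinuousFunction.mkOfCompact
      ⟨(Icc (0:ℝ) 1).restrict (F γ (u n)), (hFcont n).restrict⟩
  have hgapp : ∀ n (x : ↥(Icc (0:ℝ) 1)), g n x = F γ (u n) x := fun n x => rfl
  have hequi : Equicontinuous ((↑) : Set.range g → ↥(Icc (0:ℝ) 1) → ℝ) := by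
    intro x₀
    rw [Metric.equicontinuousAt_iff]
    intro ε hε
    obtain ⟨δ, hδ0, hδ⟩ := modulus hγmono hγconc hγcont hγ0 hp (R ^ p) hε
    refine ⟨δ, hδ0, fun x hxx i => ?_⟩
    obtain ⟨n, hn⟩ := i.2
    rw [← hn]
    show dist (g n x₀) (g n x) < ε
    rw [hgapp, hgapp, Real.dist_eq]
    refine hδ (u n) (hunn n) (huint n) (hIR n) _ x₀.2 _ x.2 ?_
    rw [Subtype.dist_eq, Real.dist_eq] at hxx
    rw [abs_sub_comm]
    exact hxx
  have hcomp : IsCompact (closure (Set.range g)) := by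
    refine BoundedContinuousFunction.arzela_ascoli
      (Icc (0:ℝ) (γ 1 + R ^ p / (p - 1))) isCompact_Icc (Set.range g) ?_ hequi
    rintro fb x ⟨n, rfl⟩
    rw [hgapp]
    exact hFmem n x x.2
  obtain ⟨glim, -, φ, hφmono, hφtend⟩ :=
    hcomp.tendsto_subseq (fun n => subset_closure (Set.mem_range_self n))
  have huni : TendstoUniformly (fun n => ⇑(g (φ n))) (⇑glim) atTop :=
    BoundedContinuousFunction.tendsto_iff_tendstoUniformly.1 hφtend
  refine ⟨fun x => if hx : x ∈ Icc (0:ℝ) 1 then glim ⟨x, hx⟩ else 0, φ, hφmono, ?_⟩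
  rw [tendstoUniformlyOn_iff_tendstoUniformly_comp_coe]
  have heq1 : (fun (i : ℕ) (x : ↥(Icc (0:ℝ) 1)) =>
      choquet (fun A => γ (volume A).toReal) (Icc 0 (x:ℝ)) (u (φ i)))
      = fun i (x : ↥(Icc (0:ℝ) 1)) => g (φ i) x := by
    funext i x
    rw [hgapp]
    exact choquet_eq γ (u (φ i)) (hunn (φ i)) x
  have heq2 : ((fun x => if hx : x ∈ Icc (0:ℝ) 1 then glim ⟨x, hx⟩ else 0) ∘
      ((↑) : ↥(Icc (0:ℝ) 1) → ℝ)) = ⇑glim := by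
    funext x
    simp only [Function.comp_apply]
    rw [dif_pos x.2]
  rw [heq1, heq2]
  exact huni

end VC

/-- The Volterra–Choquet operator `V(f)(x) = (C)∫_{[0,x]} f dμ` for a distorted Lebesgue
measure `μ(A) = γ(m(A))` (`γ` nondecreasing, concave, continuous, `γ(0)=0`) and
`1 < p < ∞` is a compact nonlinear operator from `L⁺_{p,μ}([0,1])` into `C⁺[0,1]`:
each `V(f)` is continuous and nonnegative, `V` is continuous from the `L_{p,μ}`-metric
to the uniform norm, and the image of any norm-bounded set is relatively compact, i.e.
every sequence with bounded `L_{p,μ}`-norms has a subsequence whose image under `V`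
converges uniformly on `[0,1]`. -/
theorem volterraChoquet_compact_Lp (γ : ℝ → ℝ)
    (hγmono : MonotoneOn γ (Icc 0 1)) (hγconc : ConcaveOn ℝ (Icc 0 1) γ)
    (hγcont : ContinuousOn γ (Icc 0 1)) (hγ0 : γ 0 = 0)
    (p q : ℝ) (hp : 1 < p) (hpq : 1/p + 1/q = 1) :
    (∀ f : ℝ → ℝ, MemLpPlus (fun A => γ (volume A).toReal) p f →
      (ContinuousOn (fun x => choquet (fun A => γ (volume A).toReal) (Icc 0 x) f)
          (Icc 0 1) ∧
        ∀ x ∈ Icc (0:ℝ) 1,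
          0 ≤ choquet (fun A => γ (volume A).toReal) (Icc 0 x) f)) ∧
    (∀ f : ℝ → ℝ, MemLpPlus (fun A => γ (volume A).toReal) p f →
      ∀ ε > (0:ℝ), ∃ δ > (0:ℝ), ∀ g : ℝ → ℝ,
        MemLpPlus (fun A => γ (volume A).toReal) p g →
        (choquet (fun A => γ (volume A).toReal) (Icc 0 1)
            (fun t => |f t - g t| ^ p)) ^ (1/p) < δ →
        ∀ x ∈ Icc (0:ℝ) 1,
          |choquet (fun A => γ (volume A).toReal) (Icc 0 x) f
            - choquet (fun A => γ (volume A).toReal) (Icc 0 x) g| < ε) ∧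
    (∀ R : ℝ, ∀ u : ℕ → ℝ → ℝ,
      (∀ n, MemLpPlus (fun A => γ (volume A).toReal) p (u n)) →
      (∀ n, (choquet (fun A => γ (volume A).toReal) (Icc 0 1)
          (fun t => u n t ^ p)) ^ (1/p) ≤ R) →
      ∃ (h : ℝ → ℝ) (φ : ℕ → ℕ), StrictMono φ ∧
        TendstoUniformlyOn
          (fun n x => choquet (fun A => γ (volume A).toReal) (Icc 0 x) (u (φ n)))
          h atTop (Icc 0 1)) := by
  refine ⟨fun f hf => VC.part_one hγmono hγconc hγcont hγ0 hp hf,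
    fun f hf ε hε => VC.part_two hγmono hγconc hγ0 hp hf hε,
    fun R u hu hbd => VC.part_three hγmono hγconc hγcont hγ0 hp R u hu hbd⟩
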